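/- Let F be a field, U ∈ F^{n×n} an invertible upper-triangular matrix, and 𝓡 ∈ F^{n×n} any matrix. Set E = U^{−1} − 𝓡 and let J be a subset of {1,…,n} containing ColSupport(E), with selection matrix P ∈ F^{n×c}. Then T = Pᵀ·U·P is invertible and E·P = (I − 𝓡·U)·P·T^{−1}. -/
import Mathlib


open Matrix

/-- The selection matrix `P ∈ F^{n×c}` of a subset `J ⊆ {1,…,n}` with `|J| = c`:
its columns are the standard basis vectors indexed by `J` in increasing order. -/
def selectionMatrix (F : Type*) [Zero F] [One F] {n c : ℕ}
    (J : Finset (Fin n)) (hc : J.card = c) : Matrix (Fin n) (Fin c) F :=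
  Matrix.of fun i k => if i = (J.orderIsoOfFin hc k : Fin n) then 1 else 0

/-- the correctness identity of the TrInvEC algorithm: for `U` invertible
upper-triangular, `𝓡` an approximate inverse, `E = U⁻¹ − 𝓡`, and `J ⊇ ColSupport(E)`
with selection matrix `P`, the matrix `T = Pᵀ·U·P` is invertible and
`E·P = (I − 𝓡·U)·P·T⁻¹`. -/
theorem trinv_error_blackbox_identity {F : Type*} [Field F] {n c : ℕ}
    (U : Matrix (Fin n) (Fin n) F)
    (hU : ∀ i j, j < i → U i j = 0) (hUinv : IsUnit U.det)
    (𝓡 E : Matrix (Fin n) (Fin n) F) (hE : E = U⁻¹ - 𝓡)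
    (J : Finset (Fin n)) (hc : J.card = c)
    (hsupp : ∀ j : Fin n, (∃ i, E i j ≠ 0) → j ∈ J) :
    IsUnit ((selectionMatrix F J hc)ᵀ * U * selectionMatrix F J hc).det ∧
    E * selectionMatrix F J hc =
      (1 - 𝓡 * U) * selectionMatrix F J hc *
        ((selectionMatrix F J hc)ᵀ * U * selectionMatrix F J hc)⁻¹ := by
  set f : Fin c → Fin n := ⇑(J.orderEmbOfFin hc) with hf
  set P : Matrix (Fin n) (Fin c) F := selectionMatrix F J hc with hPdef
  -- entries of T
  have hT : ∀ k l, (Pᵀ * U * P) k l = U (f k) (f l) := by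
    intro k l
    simp only [hPdef, selectionMatrix, Matrix.mul_apply, Matrix.transpose_apply,
      Matrix.of_apply, Finset.coe_orderIsoOfFin_apply, ← hf,
      ite_mul, mul_ite, mul_one, mul_zero, one_mul, zero_mul,
      Finset.sum_ite_eq, Finset.sum_ite_eq', Finset.mem_univ, if_true]
  -- U is upper triangular with nonzero diagonal
  have hUbt : U.BlockTriangular id := fun i j h => hU i j h
  have hdetU : U.det = ∏ i, U i i := Matrix.det_of_upperTriangular hUbt
  have hdiag : ∀ i, U i i ≠ 0 := by
    have h0 : U.det ≠ 0 := hUinv.ne_zero ∘ fun h => h ▸ rfl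
    rw [hdetU] at h0
    intro i
    exact Finset.prod_ne_zero_iff.mp h0 i (Finset.mem_univ i)
  -- f is strictly monotone
  have hfmono : StrictMono f := (J.orderEmbOfFin hc).strictMono
  -- T is upper triangular
  have hTbt : (Pᵀ * U * P).BlockTriangular id := by
    intro k l h
    rw [hT]
    exact hU _ _ (hfmono h)
  have hdetT : (Pᵀ * U * P).det = ∏ k, U (f k) (f k) := by
    rw [Matrix.det_of_upperTriangular hTbt]
    exact Finset.prod_congr rfl fun k _ => hT k k
  have hTunit : IsUnit (Pᵀ * U * P).det := by
    rw [hdetT, isUnit_iff_ne_zero]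
    exact Finset.prod_ne_zero_iff.mpr fun k _ => hdiag (f k)
  refine ⟨hTunit, ?_⟩
  -- columns of E are supported on J : E * P * Pᵀ = E
  have hEPP : E * P * Pᵀ = E := by
    ext i j
    by_cases hj : j ∈ J
    · obtain ⟨k0, hk0⟩ : ∃ k, f k = j := ⟨(J.orderIsoOfFin hc).symm ⟨j, hj⟩, by
        show J.orderEmbOfFin hc ((J.orderIsoOfFin hc).symm ⟨j, hj⟩) = j
        rw [← Finset.coe_orderIsoOfFin_apply, OrderIso.apply_symm_apply]⟩
      have hiff : ∀ k, j = f k ↔ k = k0 := by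
        intro k
        constructor
        · intro h; exact hfmono.injective (by rw [hk0, h])
        · rintro rfl; exact hk0.symm
      simp only [hPdef, selectionMatrix, Matrix.mul_apply, Matrix.transpose_apply,
        Matrix.of_apply, Finset.coe_orderIsoOfFin_apply, ← hf, mul_ite, ite_mul,
        mul_one, mul_zero, one_mul, zero_mul,
        Finset.sum_ite_eq', Finset.mem_univ, if_true, hiff]
      simp [hk0]
    · have hEj : ∀ i', E i' j = 0 := by
        intro i'
        by_contra h
        exact hj (hsupp j ⟨i', h⟩)
      have hne : ∀ k, j ≠ f k := fun k h => by
        rw [hf] at h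
        exact hj (h ▸ J.orderEmbOfFin_mem hc k)
      simp only [hPdef, selectionMatrix, Matrix.mul_apply, Matrix.transpose_apply,
        Matrix.of_apply, Finset.coe_orderIsoOfFin_apply, ← hf, mul_ite, ite_mul,
        mul_one, mul_zero, one_mul, zero_mul,
        Finset.sum_ite_eq', Finset.mem_univ, if_true]
      simp [hne, hEj]
  have hEU : (1 : Matrix (Fin n) (Fin n) F) - 𝓡 * U = E * U := by
    rw [hE, sub_mul, Matrix.nonsing_inv_mul U hUinv]
  have key : E * U * P = (E * P) * (Pᵀ * U * P) := by
    calc E * U * P = (E * P * Pᵀ) * U * P := by rw [hEPP]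
    _ = (E * P) * (Pᵀ * U * P) := by simp only [Matrix.mul_assoc]
  rw [hEU, key, Matrix.mul_assoc, Matrix.mul_nonsing_inv _ hTunit, Matrix.mul_one]
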